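/- Let G be an abelian topological group, H a closed subgroup of G such that the quotient group G/H is a torsion group of bounded order (there is k ∈ ℕ with k•t ∈ H for all t ∈ G), X a Hausdorff locally convex topological vector space over ℂ, and n ∈ ℕ. If P^n(H) is finite dimensional, then the restriction map r : P^n(G,X) → P^n(H,X), r(p) = p|_H, is a linear isomorphism (a linear bijection). -/

import Mathlib

open scoped BigOperators

/-- Forward difference operator: `delta h f t = f (t + h) - f t`. -/
def delta {J X : Type*} [Add J] [Sub X] (h : J) (f : J → X) : J → X :=
  fun t => f (t + h) - f t

/-- `f : J → X` is a (continuous) polynomial of degree at most `n`,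
i.e. `f ∈ P^n(J, X)`. -/
def IsPolyDeg {J X : Type*} [Add J] [Sub X] [Zero X] [TopologicalSpace J] [TopologicalSpace X]
    (n : ℕ) (f : J → X) : Prop :=
  Continuous f ∧ ∀ h : J, (delta h)^[n + 1] f = 0

theorem delta_add {J X : Type*} [Add J] [AddCommGroup X] (h : J) (f g : J → X) :
    delta h (f + g) = delta h f + delta h g := by
  funext t
  simp only [delta, Pi.add_apply]
  abel

theorem delta_smul {J X : Type*} [Add J] [AddCommGroup X] [Module ℂ X]
    (h : J) (c : ℂ) (f : J → X) :
    delta h (c • f) = c • delta h f := by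
  funext t
  simp only [delta, Pi.smul_apply, smul_sub]

theorem delta_zero {J X : Type*} [Add J] [AddCommGroup X] (h : J) :
    delta h (0 : J → X) = 0 := by
  funext t
  simp [delta]

theorem delta_iter_add {J X : Type*} [Add J] [AddCommGroup X] (h : J) (k : ℕ) (f g : J → X) :
    (delta h)^[k] (f + g) = (delta h)^[k] f + (delta h)^[k] g := by
  induction k generalizing f g with
  | zero => rfl
  | succ k ih =>
    rw [Function.iterate_succ_apply, Function.iterate_succ_apply, Function.iterate_succ_apply,
      delta_add, ih]

theorem delta_iter_smul {J X : Type*} [Add J] [AddCommGroup X] [Module ℂ X]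
    (h : J) (k : ℕ) (c : ℂ) (f : J → X) :
    (delta h)^[k] (c • f) = c • (delta h)^[k] f := by
  induction k generalizing f with
  | zero => rfl
  | succ k ih =>
    rw [Function.iterate_succ_apply, Function.iterate_succ_apply, delta_smul, ih]

theorem delta_iter_zero {J X : Type*} [Add J] [AddCommGroup X] (h : J) (k : ℕ) :
    (delta h)^[k] (0 : J → X) = 0 :=
  Function.iterate_fixed (delta_zero h) k

/-- The space `P^n(J, X)` of polynomials of degree at most `n`, as a `ℂ`-submodule of the
space of all functions `J → X`. -/
def polySpace (J X : Type*) [Add J] [TopologicalSpace J] [AddCommGroup X] [Module ℂ X]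
    [TopologicalSpace X] [IsTopologicalAddGroup X] [ContinuousSMul ℂ X] (n : ℕ) :
    Submodule ℂ (J → X) where
  carrier := {p | IsPolyDeg n p}
  zero_mem' := ⟨continuous_zero, fun h => delta_iter_zero h (n + 1)⟩
  add_mem' := by
    rintro f g ⟨hfc, hfd⟩ ⟨hgc, hgd⟩
    exact ⟨hfc.add hgc, fun h => by rw [delta_iter_add, hfd h, hgd h, add_zero]⟩
  smul_mem' := by
    rintro c f ⟨hfc, hfd⟩
    exact ⟨hfc.const_smul c, fun h => by rw [delta_iter_smul, hfd h, smul_zero]⟩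

section Aux

open Finset

theorem delta_iter_sum {J X : Type*} [Add J] [AddCommGroup X] (h : J) (r : ℕ)
    {ι : Type*} (s : Finset ι) (F : ι → J → X) :
    (delta h)^[r] (∑ i ∈ s, F i) = ∑ i ∈ s, (delta h)^[r] (F i) := by
  classical
  induction s using Finset.induction with
  | empty => simp [delta_iter_zero]
  | insert _ _ hx ih => rw [Finset.sum_insert hx, delta_iter_add, ih, Finset.sum_insert hx]

theorem delta_one_iter_smulSeq {J X : Type*} [AddCommMonoid J] [AddCommGroup X] (t : J) :
    ∀ (j : ℕ) (F : J → X),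
      (delta (1 : ℕ))^[j] (fun m : ℕ => F (m • t)) = fun m : ℕ => ((delta t)^[j] F) (m • t) := by
  intro j
  induction j with
  | zero => intro F; rfl
  | succ j ih =>
    intro F
    rw [Function.iterate_succ_apply, Function.iterate_succ_apply]
    have h1 : delta (1 : ℕ) (fun m : ℕ => F (m • t)) = fun m : ℕ => (delta t F) (m • t) := by
      funext m
      show F ((m + 1) • t) - F (m • t) = F (m • t + t) - F (m • t)
      rw [succ_nsmul]
    rw [h1, ih (delta t F)]

theorem sum_pascal {X : Type*} [AddCommGroup X] [Module ℂ X] (n m : ℕ) (D : ℕ → X)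
    (hD : D (n + 1) = 0) :
    ∑ j ∈ Finset.range (n + 1), (((m + 1).choose j : ℕ) : ℂ) • D j
      = ∑ j ∈ Finset.range (n + 1), ((m.choose j : ℕ) : ℂ) • D j
        + ∑ j ∈ Finset.range (n + 1), ((m.choose j : ℕ) : ℂ) • D (j + 1) := by
  rw [Finset.sum_range_succ (f := fun j => ((m.choose j : ℕ) : ℂ) • D (j + 1)), hD, smul_zero,
    add_zero,
    Finset.sum_range_succ' (f := fun j => (((m + 1).choose j : ℕ) : ℂ) • D j),
    Finset.sum_range_succ' (f := fun j => ((m.choose j : ℕ) : ℂ) • D j)]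
  have key : ∀ j ∈ Finset.range n, (((m + 1).choose (j + 1) : ℕ) : ℂ) • D (j + 1)
      = ((m.choose (j + 1) : ℕ) : ℂ) • D (j + 1) + ((m.choose j : ℕ) : ℂ) • D (j + 1) := by
    intro j _
    rw [Nat.choose_succ_succ]
    push_cast
    rw [add_smul, add_comm]
  rw [Finset.sum_congr rfl key, Finset.sum_add_distrib]
  simp only [Nat.choose_zero_right, Nat.cast_one]
  abel

theorem newton_formula {X : Type*} [AddCommGroup X] [Module ℂ X] (n : ℕ) :
    ∀ (m : ℕ) (a : ℕ → X), (delta (1 : ℕ))^[n + 1] a = 0 →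
      a m = ∑ j ∈ Finset.range (n + 1), ((m.choose j : ℕ) : ℂ) • (delta (1 : ℕ))^[j] a 0 := by
  intro m
  induction m with
  | zero =>
    intro a _
    rw [Finset.sum_range_succ']
    simp
  | succ m ih =>
    intro a ha
    have hb : (delta (1 : ℕ))^[n + 1] (delta (1 : ℕ) a) = 0 := by
      rw [← Function.iterate_succ_apply, Function.iterate_succ_apply', ha, delta_zero]
    have key : a (m + 1) = a m + delta (1 : ℕ) a m := by
      simp [delta]
    rw [key, ih a ha, ih (delta (1 : ℕ) a) hb]
    simp only [← Function.iterate_succ_apply]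
    exact (sum_pascal n m (fun j => (delta (1 : ℕ))^[j] a 0)
      (by show (delta (1 : ℕ))^[n + 1] a 0 = 0; rw [ha]; rfl)).symm

theorem exists_lambda_choose (n k : ℕ) (hk : 0 < k) :
    ∃ lam : Fin (n + 1) → ℂ, ∀ j ≤ n,
      (((1 : ℕ).choose j : ℕ) : ℂ)
        = ∑ i : Fin (n + 1), (((k * (i : ℕ)).choose j : ℕ) : ℂ) * lam i := by
  classical
  set V := Polynomial.degreeLT ℂ (n + 1) with hV
  let E : V →ₗ[ℂ] (Fin (n + 1) → ℂ) :=
    (LinearMap.pi fun i : Fin (n + 1) => Polynomial.leval (((k * (i : ℕ) : ℕ) : ℂ))).comp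
      V.subtype
  have hker : ∀ q : V, E q = 0 → q = 0 := by
    intro q hq
    have hq0 : (q : Polynomial ℂ) = 0 := by
      apply Polynomial.eq_zero_of_natDegree_lt_card_of_eval_eq_zero (q : Polynomial ℂ)
        (f := fun i : Fin (n + 1) => ((k * (i : ℕ) : ℕ) : ℂ))
      · intro i i' hii'
        have h2 : ((k * (i : ℕ) : ℕ) : ℂ) = ((k * (i' : ℕ) : ℕ) : ℂ) := hii'
        have h3 : (k * (i : ℕ) : ℕ) = k * (i' : ℕ) := Nat.cast_injective h2
        exact Fin.ext (Nat.eq_of_mul_eq_mul_left hk h3)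
      · intro i
        exact congrFun hq i
      · rw [Fintype.card_fin]
        by_cases hq' : (q : Polynomial ℂ) = 0
        · simp [hq']
        · have := Polynomial.mem_degreeLT.mp q.2
          exact (Polynomial.natDegree_lt_iff_degree_lt hq').mpr this
    exact Subtype.ext hq0
  have hinj : Function.Injective E :=
    LinearMap.ker_eq_bot.mp (LinearMap.ker_eq_bot'.mpr hker)
  have hfinV : FiniteDimensional ℂ V :=
    LinearEquiv.finiteDimensional (Polynomial.degreeLTEquiv ℂ (n + 1)).symm
  have hdim : Module.finrank ℂ V = Module.finrank ℂ (Fin (n + 1) → ℂ) :=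
    (Polynomial.degreeLTEquiv ℂ (n + 1)).finrank_eq
  let Eeq : V ≃ₗ[ℂ] (Fin (n + 1) → ℂ) := E.linearEquivOfInjective hinj hdim
  let φ : V →ₗ[ℂ] ℂ := (Polynomial.leval (1 : ℂ)).comp V.subtype
  let ψ : (Fin (n + 1) → ℂ) →ₗ[ℂ] ℂ := φ.comp Eeq.symm.toLinearMap
  refine ⟨fun i => ψ fun j => if i = j then 1 else 0, ?_⟩
  have hq1 : ∀ q : V, Polynomial.eval (1 : ℂ) (q : Polynomial ℂ)
      = ∑ i : Fin (n + 1), Polynomial.eval ((k * (i : ℕ) : ℕ) : ℂ) (q : Polynomial ℂ)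
          * (ψ fun j => if i = j then 1 else 0) := by
    intro q
    have h1 : Polynomial.eval (1 : ℂ) (q : Polynomial ℂ) = ψ (E q) := by
      have h2 : Eeq.symm (E q) = q := by
        have : Eeq q = E q := rfl
        rw [← this, LinearEquiv.symm_apply_apply]
      show _ = φ (Eeq.symm (E q))
      rw [h2]
      rfl
    rw [h1, LinearMap.pi_apply_eq_sum_univ ψ (E q)]
    refine Finset.sum_congr rfl fun i _ => ?_
    rw [smul_eq_mul]
    rfl
  intro j hj
  set qp : Polynomial ℂ := ((j.factorial : ℂ))⁻¹ • descPochhammer ℂ j with hqp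
  have hqmem : qp ∈ V := by
    rw [hV, Polynomial.mem_degreeLT]
    calc qp.degree ≤ (descPochhammer ℂ j).degree := Polynomial.degree_smul_le _ _
      _ ≤ (descPochhammer ℂ j).natDegree := Polynomial.degree_le_natDegree
      _ = (j : WithBot ℕ) := by rw [descPochhammer_natDegree]
      _ < ((n + 1 : ℕ) : WithBot ℕ) := by
          exact_mod_cast Nat.lt_succ_of_le hj
  have heval : ∀ m : ℕ, Polynomial.eval ((m : ℕ) : ℂ) qp = ((m.choose j : ℕ) : ℂ) := by
    intro m
    rw [hqp, Polynomial.eval_smul, smul_eq_mul, descPochhammer_eval_eq_descFactorial,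
      Nat.descFactorial_eq_factorial_mul_choose]
    push_cast
    rw [inv_mul_cancel_left₀]
    exact_mod_cast j.factorial_ne_zero
  have h6 := hq1 ⟨qp, hqmem⟩
  have h7 : Polynomial.eval (1 : ℂ) qp = (((1 : ℕ).choose j : ℕ) : ℂ) := by
    have h8 := heval 1
    rwa [Nat.cast_one] at h8
  simp only [] at h6
  rw [h7] at h6
  rw [h6]
  refine Finset.sum_congr rfl fun i _ => ?_
  rw [heval (k * (i : ℕ))]

theorem key_identity {X : Type*} [AddCommGroup X] [Module ℂ X] (n k : ℕ) (hk : 0 < k) :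
    ∃ lam : Fin (n + 1) → ℂ, ∀ a : ℕ → X, (delta (1 : ℕ))^[n + 1] a = 0 →
      a 1 = ∑ i : Fin (n + 1), lam i • a (k * (i : ℕ)) := by
  obtain ⟨lam, hlam⟩ := exists_lambda_choose n k hk
  refine ⟨lam, fun a ha => ?_⟩
  rw [newton_formula n 1 a ha]
  calc ∑ j ∈ Finset.range (n + 1), (((1 : ℕ).choose j : ℕ) : ℂ) • (delta (1 : ℕ))^[j] a 0
      = ∑ j ∈ Finset.range (n + 1),
          (∑ i : Fin (n + 1), (((k * (i : ℕ)).choose j : ℕ) : ℂ) * lam i)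
            • (delta (1 : ℕ))^[j] a 0 := by
        refine Finset.sum_congr rfl fun j hj => ?_
        rw [← hlam j (Nat.lt_succ_iff.mp (Finset.mem_range.mp hj))]
    _ = ∑ i : Fin (n + 1), ∑ j ∈ Finset.range (n + 1),
          ((((k * (i : ℕ)).choose j : ℕ) : ℂ) * lam i) • (delta (1 : ℕ))^[j] a 0 := by
        simp only [Finset.sum_smul]
        exact Finset.sum_comm
    _ = ∑ i : Fin (n + 1), lam i • a (k * (i : ℕ)) := by
        refine Finset.sum_congr rfl fun i _ => ?_
        rw [newton_formula n (k * (i : ℕ)) a ha, Finset.smul_sum]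
        refine Finset.sum_congr rfl fun j _ => ?_
        rw [mul_comm, mul_smul]

theorem delta_iter_comp_smul {G X : Type*} [AddCommGroup G] [AddCommGroup X]
    (H : AddSubgroup G) (c : ℕ) (hc : ∀ t : G, c • t ∈ H) (h : G) :
    ∀ (j : ℕ) (f : H → X),
      (delta h)^[j] (fun t : G => f ⟨c • t, hc t⟩) =
        fun t : G => ((delta (⟨c • h, hc h⟩ : H))^[j] f) ⟨c • t, hc t⟩ := by
  intro j
  induction j with
  | zero => intro f; rfl
  | succ j ih =>
    intro f
    rw [Function.iterate_succ_apply, Function.iterate_succ_apply]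
    have h1 : delta h (fun t : G => f ⟨c • t, hc t⟩)
        = fun t : G => (delta (⟨c • h, hc h⟩ : H) f) ⟨c • t, hc t⟩ := by
      funext t
      show f ⟨c • (t + h), hc _⟩ - f ⟨c • t, hc t⟩
        = f (⟨c • t, hc t⟩ + ⟨c • h, hc h⟩) - f ⟨c • t, hc t⟩
      congr 1
      exact congrArg f (Subtype.ext (by simp [smul_add]))
    rw [h1, ih (delta (⟨c • h, hc h⟩ : H) f)]

end Aux

/-- if `H` is a closed subgroup of an abelian topological group `G` with
`G/H` a torsion group of bounded order (`k • t ∈ H` for all `t ∈ G`, for some `k ≥ 1`),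
`X` is a Hausdorff locally convex topological vector space over `ℂ`, and `P^n(H)` is
finite dimensional, then the restriction map `P^n(G, X) → P^n(H, X)` is a linear
isomorphism: it is injective and surjective. -/
theorem restriction_to_bounded_order_quotient_subgroup_bijective
    {G X : Type*} [AddCommGroup G] [TopologicalSpace G] [IsTopologicalAddGroup G]
    [AddCommGroup X] [Module ℂ X] [TopologicalSpace X] [IsTopologicalAddGroup X]
    [ContinuousSMul ℂ X] [T2Space X]
    [Module ℝ X] [IsScalarTower ℝ ℂ X] [LocallyConvexSpace ℝ X]
    (H : AddSubgroup G) (hHclosed : IsClosed (H : Set G))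
    (k : ℕ) (hk : 0 < k) (hbdd : ∀ t : G, k • t ∈ H)
    (n : ℕ) (hfd : FiniteDimensional ℂ (polySpace H ℂ n)) :
    (∀ p q : G → X, IsPolyDeg n p → IsPolyDeg n q →
        (∀ x : H, p (x : G) = q (x : G)) → p = q) ∧
    (∀ f : H → X, IsPolyDeg n f →
        ∃ p : G → X, IsPolyDeg n p ∧ ∀ x : H, p (x : G) = f x) := by
  have hmem : ∀ (c : ℕ) (t : G), (k * c) • t ∈ H := by
    intro c t
    rw [mul_nsmul t k c]
    exact nsmul_mem (hbdd t) c
  constructor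
  · -- injectivity
    intro p q hp hq hpq
    obtain ⟨lam, hlam⟩ := key_identity (X := X) n k hk
    funext t
    have hd : IsPolyDeg n (p - q) := by
      have h1 : (p - q) ∈ polySpace G X n := Submodule.sub_mem _ hp hq
      exact h1
    have ha : (delta (1 : ℕ))^[n + 1] (fun m : ℕ => (p - q) (m • t)) = 0 := by
      rw [delta_one_iter_smulSeq t (n + 1) (p - q), hd.2 t]
      rfl
    have h1 := hlam (fun m : ℕ => (p - q) (m • t)) ha
    have h2 : (p - q) t = 0 := by
      have h3 : (p - q) t = (fun m : ℕ => (p - q) (m • t)) 1 := by simp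
      rw [h3, show (fun m : ℕ => (p - q) (m • t)) 1 = (p - q) (1 • t) from rfl, h1]
      refine Finset.sum_eq_zero fun i _ => ?_
      have h4 : (p - q) ((k * (i : ℕ)) • t) = 0 := by
        have h5 := hpq ⟨(k * (i : ℕ)) • t, hmem (i : ℕ) t⟩
        simp only [Pi.sub_apply]
        rw [sub_eq_zero]
        exact h5
      simp only [h4, smul_zero]
    have := sub_eq_zero.mp (by simpa using h2)
    exact this
  · -- surjectivity
    intro f hf
    obtain ⟨lam, hlam⟩ := key_identity (X := X) n k hk
    refine ⟨fun t => ∑ i : Fin (n + 1), lam i • f ⟨(k * (i : ℕ)) • t, hmem (i : ℕ) t⟩,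
      ⟨?_, ?_⟩, ?_⟩
    · -- continuity
      refine continuous_finset_sum _ fun i _ => ?_
      refine Continuous.const_smul ?_ (lam i)
      exact hf.1.comp (Continuous.subtype_mk (continuous_nsmul (k * (i : ℕ))) _)
    · -- polynomial property
      intro h
      have hp_eq : (fun t => ∑ i : Fin (n + 1), lam i • f ⟨(k * (i : ℕ)) • t, hmem (i : ℕ) t⟩)
          = ∑ i : Fin (n + 1),
              lam i • (fun t : G => f ⟨(k * (i : ℕ)) • t, hmem (i : ℕ) t⟩) := by
        funext t
        simp
      rw [hp_eq, delta_iter_sum]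
      refine Finset.sum_eq_zero fun i _ => ?_
      rw [delta_iter_smul,
        delta_iter_comp_smul H (k * (i : ℕ)) (hmem (i : ℕ)) h (n + 1) f,
        hf.2 (⟨(k * (i : ℕ)) • h, hmem (i : ℕ) h⟩ : H)]
      rw [show (fun t : G => (0 : ↥H → X) ⟨(k * (i : ℕ)) • t, hmem (i : ℕ) t⟩) = 0 from rfl]
      rw [smul_zero]
    · -- restriction
      intro x
      have hax : (delta (1 : ℕ))^[n + 1] (fun m : ℕ => f (m • x)) = 0 := by
        rw [delta_one_iter_smulSeq x (n + 1) f, hf.2 x]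
        rfl
      have h1 := hlam (fun m : ℕ => f (m • x)) hax
      have h2 : f x = ∑ i : Fin (n + 1), lam i • f ((k * (i : ℕ)) • x) := by
        simpa using h1
      rw [h2]
      refine Finset.sum_congr rfl fun i _ => ?_
      have h9 : ((k * (i : ℕ)) • x : ↥H) = (⟨(k * (i : ℕ)) • (x : G), hmem (i : ℕ) x⟩ : ↥H) :=
        Subtype.ext (by simp)
      rw [h9]
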